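/- arXiv:1309.4659 — 4 statements merged into one kernel-verified Lean document; each statement's English description precedes it below -/
import Mathlib

section
/- Let f_r, f_t, f_tt ∈ ℝ^d with f_r and f_t linearly independent and f_t ≠ 0. Then the quantity η = ((⟪f_r,f_t⟫⟪f_tt,f_t⟫ - ⟪f_t,f_t⟫⟪f_r,f_tt⟫))/(|f_r∧f_t|·⟪f_t,f_t⟫) satisfies |η| ≤ |f_t∧f_tt|/|f_t|², where |x∧y| = sqrt(|x|²|y|² - ⟪x,y⟫²). -/
open RealInnerProductSpace

theorem geodesic_curvature_bound (d : ℕ) (fr ft ftt : EuclideanSpace ℝ (Fin d))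
    (hli : LinearIndependent ℝ ![fr, ft]) :
    |(⟪fr, ft⟫ * ⟪ftt, ft⟫ - ⟪ft, ft⟫ * ⟪fr, ftt⟫) /
        (Real.sqrt (‖fr‖ ^ 2 * ‖ft‖ ^ 2 - ⟪fr, ft⟫ ^ 2) * ⟪ft, ft⟫)| ≤
      Real.sqrt (‖ft‖ ^ 2 * ‖ftt‖ ^ 2 - ⟪ft, ftt⟫ ^ 2) / ‖ft‖ ^ 2 := by
  obtain ⟨hft, hnm⟩ := linearIndependent_fin2.mp hli
  simp only [Matrix.cons_val_one, Matrix.head_cons, Matrix.cons_val_zero] at hft hnm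
  set t : ℝ := ⟪ft, ft⟫ with htdef
  have htn : t = ‖ft‖ ^ 2 := real_inner_self_eq_norm_sq ft
  have ht : (0:ℝ) < t := by rw [htn]; exact pow_pos (norm_pos_iff.mpr hft) 2
  set u : EuclideanSpace ℝ (Fin d) := fr - (⟪fr, ft⟫ / t) • ft with hu
  set v : EuclideanSpace ℝ (Fin d) := ftt - (⟪ftt, ft⟫ / t) • ft with hv
  have hune : u ≠ 0 := fun h => hnm (⟪fr, ft⟫ / t) (sub_eq_zero.mp h).symm
  set P : ℝ := ‖fr‖ ^ 2 * ‖ft‖ ^ 2 - ⟪fr, ft⟫ ^ 2 with hP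
  set Q : ℝ := ‖ft‖ ^ 2 * ‖ftt‖ ^ 2 - ⟪ft, ftt⟫ ^ 2 with hQ
  set N : ℝ := ⟪fr, ft⟫ * ⟪ftt, ft⟫ - t * ⟪fr, ftt⟫ with hN
  have huu : ⟪u, u⟫ = P / t := by
    simp only [hu, hP, inner_sub_left, inner_sub_right, real_inner_smul_left,
      real_inner_smul_right, ← htdef]
    rw [real_inner_comm ft fr, ← real_inner_self_eq_norm_sq fr, ← htn]
    field_simp; ring
  have hvv : ⟪v, v⟫ = Q / t := by
    simp only [hv, hQ, inner_sub_left, inner_sub_right, real_inner_smul_left,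
      real_inner_smul_right, ← htdef]
    rw [real_inner_comm ft ftt, ← real_inner_self_eq_norm_sq ftt, ← htn]
    field_simp; ring
  have huv : ⟪u, v⟫ = -N / t := by
    simp only [hu, hv, hN, inner_sub_left, inner_sub_right, real_inner_smul_left,
      real_inner_smul_right, ← htdef]
    rw [real_inner_comm ft ftt]
    field_simp; ring
  have hPpos : 0 < P := by
    have h1 : (0:ℝ) < ⟪u, u⟫ :=
      lt_of_le_of_ne real_inner_self_nonneg (Ne.symm (inner_self_ne_zero.mpr hune))
    rw [huu] at h1
    have h2 := mul_pos h1 ht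
    rwa [div_mul_cancel₀ _ ht.ne'] at h2
  have hQnn : 0 ≤ Q := by
    have h1 : (0:ℝ) ≤ ⟪v, v⟫ := real_inner_self_nonneg
    rw [hvv] at h1
    have h2 := mul_nonneg h1 ht.le
    rwa [div_mul_cancel₀ _ ht.ne'] at h2
  have hkey : N ^ 2 ≤ P * Q := by
    have := real_inner_mul_inner_self_le u v
    rw [huu, hvv, huv] at this
    have h2 : N ^ 2 / t ^ 2 ≤ P * Q / t ^ 2 := by
      have : (-N / t) * (-N / t) ≤ (P / t) * (Q / t) := this
      calc N ^ 2 / t ^ 2 = (-N / t) * (-N / t) := by ring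
        _ ≤ (P / t) * (Q / t) := this
        _ = P * Q / t ^ 2 := by ring
    have ht2 : (0:ℝ) < t ^ 2 := by positivity
    calc N ^ 2 = N ^ 2 / t ^ 2 * t ^ 2 := by field_simp
      _ ≤ P * Q / t ^ 2 * t ^ 2 := by nlinarith
      _ = P * Q := by field_simp
  have hNle : |N| ≤ Real.sqrt P * Real.sqrt Q := by
    rw [← Real.sqrt_sq_eq_abs, ← Real.sqrt_mul hPpos.le]
    exact Real.sqrt_le_sqrt hkey
  have hsP : 0 < Real.sqrt P := Real.sqrt_pos.mpr hPpos
  have hsQ : 0 ≤ Real.sqrt Q := Real.sqrt_nonneg Q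
  rw [← htn, abs_div, abs_of_pos (mul_pos hsP ht)]
  rw [div_le_div_iff₀ (mul_pos hsP ht) ht]
  calc |⟪fr, ft⟫ * ⟪ftt, ft⟫ - t * ⟪fr, ftt⟫| * t = |N| * t := by rw [hN]
    _ ≤ (Real.sqrt P * Real.sqrt Q) * t := by nlinarith
    _ = Real.sqrt Q * (Real.sqrt P * t) := by ring
end

section
/- Let α be a holomorphic 1-form on a neighborhood of 0 in ℂ with a zero of order n ≥ 0 at 0, i.e. α = h(z) dz with h holomorphic, h(z) = z^n g(z), g(0) ≠ 0. Then there exists a holomorphic function φ defined near 0 with φ(0) = 0, φ'(0) ≠ 0, such that h(z) = φ(z)^n · φ'(z) for all z near 0 (i.e. α = φ*(z^n dz)). -/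
open Filter

theorem exists_antideriv_aux (n : ℕ) (g : ℂ → ℂ) (hg : AnalyticAt ℂ g 0) :
    ∃ G : ℂ → ℂ, AnalyticAt ℂ G 0 ∧ ((n : ℂ) + 1) * G 0 = g 0 ∧
      ∀ᶠ z in nhds 0, HasDerivAt (fun w => w ^ (n + 1) * G w) (z ^ n * g z) z := by
  obtain ⟨p, hp⟩ := hg
  obtain ⟨r, hpr⟩ := hp
  obtain ⟨ρ, hρ0, hρr⟩ := ENNReal.lt_iff_exists_nnreal_btwn.mp hpr.r_pos
  have hρ0' : (0 : ℝ) < ρ := by exact_mod_cast hρ0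
  set a : ℕ → ℂ := p.coeff with ha
  set c : ℕ → ℂ := fun k => a k / ((k + n + 1 : ℕ) : ℂ) with hc
  have hden : ∀ k, ((k + n + 1 : ℕ) : ℂ) ≠ 0 := fun k =>
    Nat.cast_ne_zero.mpr (Nat.succ_ne_zero _)
  have hca : ∀ k, c k * ((k + n + 1 : ℕ) : ℂ) = a k := fun k => div_mul_cancel₀ _ (hden k)
  have hcle : ∀ k, ‖c k‖ ≤ ‖a k‖ := by
    intro k
    rw [hc, norm_div]
    apply div_le_self (norm_nonneg _)
    rw [Complex.norm_natCast]
    exact_mod_cast Nat.one_le_iff_ne_zero.mpr (Nat.succ_ne_zero _)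
  have hsum : Summable fun k => ‖p k‖ * (ρ : ℝ) ^ k :=
    p.summable_norm_mul_pow (hρr.trans_le hpr.r_le)
  set q := FormalMultilinearSeries.ofScalars ℂ c with hq
  have hqrad : (ρ : ENNReal) ≤ q.radius := by
    apply q.le_radius_of_summable_norm
    apply hsum.of_nonneg_of_le
      (fun k => mul_nonneg (norm_nonneg _) (pow_nonneg ρ.coe_nonneg _))
    intro k
    rw [hq, FormalMultilinearSeries.ofScalars_norm]
    gcongr
    exact (hcle k).trans (le_of_eq (p.norm_apply_eq_norm_coef).symm)
  have hq0 : 0 < q.radius := lt_of_lt_of_le hρ0 hqrad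
  set G := q.sum with hGdef
  have hG : HasFPowerSeriesOnBall G q 0 q.radius := q.hasFPowerSeriesOnBall hq0
  have hcast : ∀ k : ℕ, ((k + n + 1 : ℕ) : ℂ) ≠ 0 := hden
  have hne : ((n : ℂ) + 1) ≠ 0 := Nat.cast_add_one_ne_zero n
  have ha0 : a 0 = g 0 := hpr.hasFPowerSeriesAt.coeff_zero 1
  have hqc : ∀ k, q.coeff k = c k := by
    intro k
    rw [hq, FormalMultilinearSeries.coeff]
    rw [show (1 : Fin k → ℂ) = fun _ => (1:ℂ) from rfl]
    rw [FormalMultilinearSeries.ofScalars_apply_eq]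
    simp
  have hG0 : ((n : ℂ) + 1) * G 0 = g 0 := by
    have h1 : q.coeff 0 = G 0 := hG.hasFPowerSeriesAt.coeff_zero 1
    have h3 : c 0 = g 0 / ((n : ℂ) + 1) := by
      simp only [hc, Nat.zero_add, ha0]
      push_cast
      ring
    rw [← h1, hqc 0, h3]
    field_simp
  -- HasSum facts
  have hgz : ∀ z : ℂ, ‖z‖ < (ρ : ℝ) → HasSum (fun k => a k * z ^ k) (g z) := by
    intro z hz
    have hmem : z ∈ Metric.eball (0 : ℂ) r := by
      rw [EMetric.mem_ball, edist_zero_right]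
      exact lt_of_lt_of_le (show (‖z‖₊ : ENNReal) < ρ by exact_mod_cast hz) hρr.le
    have := hpr.hasSum hmem
    simp only [zero_add] at this
    convert this using 2 with k
    · rfl
    rw [FormalMultilinearSeries.apply_eq_pow_smul_coeff, smul_eq_mul]
    ring
  have hGz : ∀ z : ℂ, ‖z‖ < (ρ : ℝ) → HasSum (fun k => c k * z ^ k) (G z) := by
    intro z hz
    have hmem : z ∈ Metric.eball (0 : ℂ) q.radius := by
      rw [EMetric.mem_ball, edist_zero_right]
      exact lt_of_lt_of_le (by exact_mod_cast hz) hqrad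
    have := hG.hasSum hmem
    simp only [zero_add] at this
    convert this using 2 with k
    · rfl
    rw [FormalMultilinearSeries.apply_eq_pow_smul_coeff, smul_eq_mul, hqc k]
    ring
  -- termwise differentiation
  have hkey : ∀ z ∈ Metric.ball (0 : ℂ) (ρ : ℝ),
      HasDerivAt (fun w => ∑' k, c k * w ^ (k + n + 1)) (∑' k, a k * z ^ (k + n)) z := by
    have hd : ∀ (k : ℕ) (w : ℂ), w ∈ Metric.ball (0:ℂ) (ρ : ℝ) →
        HasDerivAt (fun w => c k * w ^ (k + n + 1)) (a k * w ^ (k + n)) w := by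
      intro k w _
      have h1 := (hasDerivAt_pow (k + n + 1) w).const_mul (c k)
      have h2 : c k * (((k + n + 1 : ℕ) : ℂ) * w ^ (k + n + 1 - 1)) = a k * w ^ (k + n) := by
        rw [show k + n + 1 - 1 = k + n from rfl, ← mul_assoc, hca]
      rwa [h2] at h1
    have hb : ∀ (k : ℕ) (w : ℂ), w ∈ Metric.ball (0:ℂ) (ρ : ℝ) →
        ‖a k * w ^ (k + n)‖ ≤ ‖p k‖ * (ρ : ℝ) ^ k * (ρ : ℝ) ^ n := by
      intro k w hw
      rw [Metric.mem_ball, dist_zero_right] at hw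
      rw [norm_mul, norm_pow, pow_add]
      calc ‖a k‖ * (‖w‖ ^ k * ‖w‖ ^ n)
          ≤ ‖a k‖ * ((ρ : ℝ) ^ k * (ρ : ℝ) ^ n) := by
            gcongr
        _ = ‖p k‖ * (ρ : ℝ) ^ k * (ρ : ℝ) ^ n := by
            rw [p.norm_apply_eq_norm_coef]; ring
    have h0 : Summable fun k => c k * (0:ℂ) ^ (k + n + 1) := by
      apply Summable.congr summable_zero
      intro k
      rw [zero_pow (Nat.succ_ne_zero _), mul_zero]
    intro z hz
    exact hasDerivAt_tsum_of_isPreconnected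
      (g := fun k w => c k * w ^ (k + n + 1)) (g' := fun k w => a k * w ^ (k + n))
      (hsum.mul_right _) Metric.isOpen_ball ((convex_ball _ _).isPreconnected)
      hd hb (Metric.mem_ball_self hρ0') h0 hz
  -- conclude
  refine ⟨G, hG.analyticAt, hG0, ?_⟩
  have hball : Metric.ball (0 : ℂ) ρ ∈ nhds (0 : ℂ) :=
    Metric.ball_mem_nhds _ hρ0'
  filter_upwards [hball] with z hz
  have hz' : ‖z‖ < (ρ : ℝ) := by rwa [Metric.mem_ball, dist_zero_right] at hz
  have hd := hkey z hz
  have hval : (∑' k, a k * z ^ (k + n)) = z ^ n * g z := by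
    have : ∀ k, a k * z ^ (k + n) = z ^ n * (a k * z ^ k) := by
      intro k; rw [pow_add]; ring
    rw [tsum_congr this, tsum_mul_left, (hgz z hz').tsum_eq]
  rw [hval] at hd
  apply hd.congr_of_eventuallyEq
  filter_upwards [Metric.isOpen_ball.mem_nhds hz] with w hw
  have hw' : ‖w‖ < (ρ : ℝ) := by rwa [Metric.mem_ball, dist_zero_right] at hw
  have : ∀ k, c k * w ^ (k + n + 1) = w ^ (n + 1) * (c k * w ^ k) := by
    intro k; rw [pow_add, pow_add]; ring
  rw [tsum_congr this, tsum_mul_left, (hGz w hw').tsum_eq]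

theorem normalize_holomorphic_form (n : ℕ) (h g : ℂ → ℂ)
    (hg : AnalyticAt ℂ g 0) (hg0 : g 0 ≠ 0)
    (hhg : ∀ᶠ z in nhds 0, h z = z ^ n * g z) :
    ∃ φ : ℂ → ℂ, AnalyticAt ℂ φ 0 ∧ φ 0 = 0 ∧ deriv φ 0 ≠ 0 ∧
      ∀ᶠ z in nhds 0, h z = φ z ^ n * deriv φ z := by
  obtain ⟨G, hGan, hG0, hGderiv⟩ := exists_antideriv_aux n g hg
  have hne : ((n : ℂ) + 1) ≠ 0 := Nat.cast_add_one_ne_zero n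
  have hG0ne : G 0 ≠ 0 := by
    intro h0
    exact hg0 (by rw [← hG0, h0, mul_zero])
  set b : ℂ := Complex.exp (((n : ℂ) + 1)⁻¹ * Complex.log (g 0)) with hbdef
  have hcast : ((n + 1 : ℕ) : ℂ) = (n : ℂ) + 1 := by push_cast; ring
  have hb : b ^ (n + 1) = g 0 := by
    rw [hbdef, ← Complex.exp_nat_mul, hcast, ← mul_assoc, mul_inv_cancel₀ hne, one_mul,
      Complex.exp_log hg0]
  have hbne : b ≠ 0 := Complex.exp_ne_zero _
  set u : ℂ → ℂ := fun z => b * Complex.exp (((n : ℂ) + 1)⁻¹ * Complex.log (G z / G 0))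
    with hudef
  have hdiv : AnalyticAt ℂ (fun z => G z / G 0) 0 := hGan.div analyticAt_const hG0ne
  have hdiv0 : G 0 / G 0 = 1 := div_self hG0ne
  have huan : AnalyticAt ℂ u 0 := by
    apply analyticAt_const.mul
    apply analyticAt_cexp.comp
    apply analyticAt_const.mul
    apply (analyticAt_clog ?_).comp hdiv
    rw [hdiv0]
    exact Complex.one_mem_slitPlane
  have hu0 : u 0 = b := by
    rw [hudef]
    simp [hdiv0, Complex.log_one]
  have hupow : ∀ᶠ z in nhds 0, u z ^ (n + 1) = ((n : ℂ) + 1) * G z := by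
    filter_upwards [hGan.continuousAt.eventually_ne hG0ne] with z hz
    have h1 : Complex.exp (((n : ℂ) + 1)⁻¹ * Complex.log (G z / G 0)) ^ (n + 1)
        = G z / G 0 := by
      rw [← Complex.exp_nat_mul, hcast, ← mul_assoc, mul_inv_cancel₀ hne, one_mul,
        Complex.exp_log (div_ne_zero hz hG0ne)]
    rw [hudef]
    simp only [mul_pow, hb, h1]
    rw [← hG0]
    field_simp
  set φ : ℂ → ℂ := fun z => z * u z with hφdef
  have hφan : AnalyticAt ℂ φ 0 := (analyticAt_id.mul huan)
  have hφ0 : φ 0 = 0 := zero_mul _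
  have hφd0 : HasDerivAt φ b 0 := by
    have := (hasDerivAt_id' (0 : ℂ)).mul huan.differentiableAt.hasDerivAt
    exact this.congr_deriv (by simp [hu0])
  have hφ'0 : deriv φ 0 = b := hφd0.deriv
  refine ⟨φ, hφan, hφ0, by rw [hφ'0]; exact hbne, ?_⟩
  have hEq : (fun z => φ z ^ (n + 1)) =ᶠ[nhds 0]
      (fun z => ((n : ℂ) + 1) * (z ^ (n + 1) * G z)) := by
    filter_upwards [hupow] with z hz
    simp only [hφdef, mul_pow]
    rw [hz]
    ring
  filter_upwards [hEq.deriv, hGderiv, hφan.eventually_analyticAt, hhg] with z hdz hGz hφz hhz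
  have h1 : HasDerivAt (fun w => φ w ^ (n + 1))
      (((n + 1 : ℕ) : ℂ) * φ z ^ (n + 1 - 1) * deriv φ z) z :=
    hφz.differentiableAt.hasDerivAt.pow (n + 1)
  have h2 : HasDerivAt (fun w => ((n : ℂ) + 1) * (w ^ (n + 1) * G w))
      (((n : ℂ) + 1) * (z ^ n * g z)) z := hGz.const_mul _
  have h3 := h1.deriv
  have h4 := h2.deriv
  rw [h3, h4] at hdz
  rw [hcast, show n + 1 - 1 = n from rfl] at hdz
  apply mul_left_cancel₀ hne
  rw [hhz, ← hdz]
  ring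
end

section
/- Let g₀ be the Riemannian metric on the punctured disc D* = {z ∈ ℂ : 0 < |z| < 1} given in polar coordinates (r,t) by the matrix [[1 + r²cos²t + r^{-2}sin²t, -(r³ + r^{-1})cos t sin t], [-(r³+r^{-1}) cos t sin t, r² sin²t + r^{-2}cos²t]]. Then for every r ∈ (0,1), the g₀-length of the circle t ↦ re^{it}, t ∈ [0,2π], is at least 4; in particular g₀(∂/∂t, ∂/∂t) = cos²t + r⁴sin²t ≥ cos²t. -/
open Real intervalIntegral

theorem circle_length_lower_bound (r : ℝ) (hr0 : 0 < r) (hr1 : r < 1) :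
    (∀ t : ℝ, cos t ^ 2 ≤ cos t ^ 2 + r ^ 4 * sin t ^ 2) ∧
      4 ≤ ∫ t in (0 : ℝ)..(2 * π), Real.sqrt (cos t ^ 2 + r ^ 4 * sin t ^ 2) := by
  have hpi : (0:ℝ) < π := Real.pi_pos
  constructor
  · intro t
    nlinarith [sq_nonneg (sin t), pow_pos hr0 4]
  · have habs : ∀ t : ℝ, |cos t| ≤ Real.sqrt (cos t ^ 2 + r ^ 4 * sin t ^ 2) := by
      intro t
      rw [← Real.sqrt_sq_eq_abs]
      exact Real.sqrt_le_sqrt (by nlinarith [sq_nonneg (sin t), pow_pos hr0 4])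
    have hcont : Continuous fun t : ℝ => Real.sqrt (cos t ^ 2 + r ^ 4 * sin t ^ 2) := by
      continuity
    have hcont2 : Continuous fun t : ℝ => |cos t| := by continuity
    have key : (∫ t in (0:ℝ)..(2*π), |cos t|) = 4 := by
      have s1 : (∫ t in (0:ℝ)..(π/2), |cos t|) = 1 := by
        rw [intervalIntegral.integral_congr (g := fun t => cos t)]
        · rw [integral_cos]; simp
        · intro t ht
          rw [Set.uIcc_of_le (by positivity)] at ht
          exact abs_of_nonneg (Real.cos_nonneg_of_mem_Icc ⟨by linarith [ht.1], ht.2⟩)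
      have s2 : (∫ t in (π/2:ℝ)..(3*π/2), |cos t|) = 2 := by
        rw [intervalIntegral.integral_congr (g := fun t => -cos t)]
        · rw [intervalIntegral.integral_neg, integral_cos]
          have : Real.sin (3*π/2) = -1 := by
            have : (3*π/2 : ℝ) = π + π/2 := by ring
            rw [this, Real.sin_add]; simp
          rw [this]; simp; norm_num
        · intro t ht
          rw [Set.uIcc_of_le (by linarith)] at ht
          exact abs_of_nonpos (Real.cos_nonpos_of_pi_div_two_le_of_le ht.1 (by linarith [ht.2]))
      have s3 : (∫ t in (3*π/2:ℝ)..(2*π), |cos t|) = 1 := by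
        rw [intervalIntegral.integral_congr (g := fun t => cos t)]
        · rw [integral_cos]
          have h32 : Real.sin (3*π/2) = -1 := by
            have : (3*π/2 : ℝ) = π + π/2 := by ring
            rw [this, Real.sin_add]; simp
          rw [h32, Real.sin_two_pi]; norm_num
        · intro t ht
          rw [Set.uIcc_of_le (by linarith)] at ht
          have h : cos t = cos (t - 2*π) := (Real.cos_sub_two_pi t).symm
          show |cos t| = cos t
          rw [h]
          exact abs_of_nonneg (Real.cos_nonneg_of_mem_Icc ⟨by linarith [ht.1], by linarith [ht.2]⟩)
      have i1 : IntervalIntegrable (fun t : ℝ => |cos t|) MeasureTheory.volume 0 (π/2) :=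
        hcont2.intervalIntegrable _ _
      have i2 : IntervalIntegrable (fun t : ℝ => |cos t|) MeasureTheory.volume (π/2) (3*π/2) :=
        hcont2.intervalIntegrable _ _
      have i3 : IntervalIntegrable (fun t : ℝ => |cos t|) MeasureTheory.volume (3*π/2) (2*π) :=
        hcont2.intervalIntegrable _ _
      rw [← intervalIntegral.integral_add_adjacent_intervals (i1.trans i2) i3,
          ← intervalIntegral.integral_add_adjacent_intervals i1 i2, s1, s2, s3]
      norm_num
    calc (4:ℝ) = ∫ t in (0:ℝ)..(2*π), |cos t| := key.symm
      _ ≤ ∫ t in (0:ℝ)..(2*π), Real.sqrt (cos t ^ 2 + r ^ 4 * sin t ^ 2) := by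
          apply intervalIntegral.integral_mono_on (by linarith)
            (hcont2.intervalIntegrable _ _) (hcont.intervalIntegrable _ _)
          intro t _
          exact habs t
end

section
/- The harmonic map f: D* → ℝ³ defined in polar coordinates by f(r,t) = (r cos t, log r, -(1/r) sin t) has first fundamental form g = (1/r²)·g₀ where g₀(∂/∂t,∂/∂t) = cos²t + r⁴ sin²t; consequently every circle r = const has g₀-length at least 4, uniformly in r. -/
open Real intervalIntegral

theorem abs_cos_integral_eq_four : ∫ t in (0:ℝ)..(2*π), |cos t| = 4 := by
  have hc : ∀ a b : ℝ, IntervalIntegrable (fun t => |cos t|) MeasureTheory.volume a b :=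
    fun a b => (continuous_abs.comp continuous_cos).intervalIntegrable a b
  have hpi := pi_pos
  rw [← integral_add_adjacent_intervals (hc 0 (π/2)) (hc (π/2) (2*π)),
      ← integral_add_adjacent_intervals (hc (π/2) (3*π/2)) (hc (3*π/2) (2*π))]
  have e1 : ∫ t in (0:ℝ)..(π/2), |cos t| = 1 := by
    rw [integral_congr (g := cos) ?_, integral_cos]
    · simp
    · intro x hx
      rw [Set.uIcc_of_le (by linarith)] at hx
      exact abs_of_nonneg (cos_nonneg_of_mem_Icc ⟨by linarith [hx.1], hx.2⟩)
  have e2 : ∫ t in (π/2:ℝ)..(3*π/2), |cos t| = 2 := by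
    rw [integral_congr (g := fun t => -cos t) ?_]
    · rw [integral_neg, integral_cos]
      simp [sin_pi_div_two]
      rw [show (3*π/2 : ℝ) = π + π/2 by ring, sin_add]
      simp
      linarith
    · intro x hx
      rw [Set.uIcc_of_le (by linarith)] at hx
      exact abs_of_nonpos (cos_nonpos_of_pi_div_two_le_of_le hx.1 (by linarith [hx.2]))
  have e3 : ∫ t in (3*π/2:ℝ)..(2*π), |cos t| = 1 := by
    rw [integral_congr (g := cos) ?_, integral_cos]
    · rw [show (3*π/2 : ℝ) = π + π/2 by ring, sin_add, sin_two_pi]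
      simp
    · intro x hx
      rw [Set.uIcc_of_le (by linarith)] at hx
      obtain ⟨hx1, hx2⟩ := hx
      have h0 : (0:ℝ) ≤ cos (x - 2*π) :=
        cos_nonneg_of_mem_Icc (Set.mem_Icc.mpr ⟨by linarith, by linarith⟩)
      show |cos x| = cos x
      rw [show cos x = cos (x - 2*π) by rw [cos_sub_two_pi]]
      exact abs_of_nonneg h0
  rw [e1, e2, e3]; norm_num

theorem euclidean_norm_sq_three (v : Fin 3 → ℝ) :
    ‖(WithLp.equiv 2 (Fin 3 → ℝ)).symm v‖ ^ 2 = v 0 ^ 2 + v 1 ^ 2 + v 2 ^ 2 := by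
  rw [EuclideanSpace.norm_eq, Real.sq_sqrt (by positivity)]
  simp [Fin.sum_univ_three, sq_abs]

theorem harmonic_horn_metric (f : ℝ → ℝ → EuclideanSpace ℝ (Fin 3))
    (hf : ∀ r t, f r t = (WithLp.equiv 2 (Fin 3 → ℝ)).symm
      ![r * cos t, Real.log r, -(1 / r) * sin t]) :
    ∀ r : ℝ, 0 < r → r < 1 →
      (∀ t : ℝ, r ^ 2 * ‖deriv (f r) t‖ ^ 2 = cos t ^ 2 + r ^ 4 * sin t ^ 2) ∧
        4 ≤ ∫ t in (0 : ℝ)..(2 * π), Real.sqrt (r ^ 2 * ‖deriv (f r) t‖ ^ 2) := by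
  intro r hr hr1
  have hr0 : r ≠ 0 := ne_of_gt hr
  have hd : ∀ t : ℝ, HasDerivAt (f r)
      ((WithLp.equiv 2 (Fin 3 → ℝ)).symm ![-(r * sin t), 0, -(1 / r) * cos t]) t := by
    intro t
    have hfr : f r = fun t => (WithLp.equiv 2 (Fin 3 → ℝ)).symm
        ![r * cos t, Real.log r, -(1 / r) * sin t] := funext (hf r)
    rw [hfr]
    have h : HasDerivAt (fun t : ℝ => (![r * cos t, Real.log r, -(1 / r) * sin t] : Fin 3 → ℝ))
        ![-(r * sin t), 0, -(1 / r) * cos t] t := by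
      rw [hasDerivAt_pi]
      intro i
      fin_cases i
      · simpa using (hasDerivAt_cos t).const_mul r
      · simpa using hasDerivAt_const t (Real.log r)
      · simpa using (hasDerivAt_sin t).const_mul (-(1/r))
    exact ((PiLp.continuousLinearEquiv 2 ℝ (fun _ : Fin 3 => ℝ)).symm.hasFDerivAt.comp_hasDerivAt
      t h)
  have hnorm : ∀ t : ℝ, r ^ 2 * ‖deriv (f r) t‖ ^ 2 = cos t ^ 2 + r ^ 4 * sin t ^ 2 := by
    intro t
    rw [(hd t).deriv, euclidean_norm_sq_three]
    simp only [Matrix.cons_val_zero, Matrix.cons_val_one, Matrix.head_cons,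
      Matrix.cons_val_two, Matrix.tail_cons]
    field_simp
    ring
  refine ⟨hnorm, ?_⟩
  have hcong : (∫ t in (0 : ℝ)..(2 * π), Real.sqrt (r ^ 2 * ‖deriv (f r) t‖ ^ 2))
      = ∫ t in (0 : ℝ)..(2 * π), Real.sqrt (cos t ^ 2 + r ^ 4 * sin t ^ 2) :=
    integral_congr fun x _ => by rw [hnorm]
  rw [hcong, ← abs_cos_integral_eq_four]
  have hpi := pi_pos
  apply integral_mono_on (by linarith)
    ((continuous_abs.comp continuous_cos).intervalIntegrable _ _)
    (((continuous_cos.pow 2).add ((continuous_const.mul (continuous_sin.pow 2)))).sqrt.intervalIntegrable _ _)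
  intro x _
  calc |cos x| = Real.sqrt (cos x ^ 2) := (Real.sqrt_sq_eq_abs _).symm
    _ ≤ Real.sqrt (cos x ^ 2 + r ^ 4 * sin x ^ 2) := Real.sqrt_le_sqrt (by nlinarith [sq_nonneg (sin x), pow_pos hr 4])
end
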